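/- Let Γ be the random bipartite graph. Suppose h ∈ F(S_{l,r}(Γ)), U is a finite bipartite subgraph of dom(h) on which h restricts to the identity, and v ∈ dom(h) \ U. Then h↾(U ∪ {v}) is either an isomorphism (preserves the cross-type of every cross-edge of U ∪ {v}) or a switch with respect to v. -/

import Mathlib

/-! Preamble: bipartite graphs, the random bipartite graph, side-preserving
permutation groups, switches, switch groups, and related notions. -/

/-- A bipartite graph on a vertex type `V`: the sides `left` and `right`
partition `V`, both sides are nonempty, and `adj` (the relation `P₁`) only holds
from `left` to `right`.  The relation `P₂` is the complement of `adj` on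
`left × right`. -/
structure BipartiteGraph (V : Type*) where
  left : Set V
  right : Set V
  adj : V → V → Prop
  left_nonempty : left.Nonempty
  right_nonempty : right.Nonempty
  union_eq : left ∪ right = Set.univ
  disjoint_sides : Disjoint left right
  adj_dom : ∀ a b, adj a b → a ∈ left ∧ b ∈ right

/-- The two sides of a bipartite graph. -/
inductive BSide : Type
  | l : BSide
  | r : BSide
deriving DecidableEq

namespace BipartiteGraph

variable {V : Type*} (Γ : BipartiteGraph V)

/-- The side of the graph indexed by an element of `BSide`. -/
def side : BSide → Set V
  | BSide.l => Γ.left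
  | BSide.r => Γ.right

/-- `Γ` is (isomorphic to) the random bipartite graph: it is countable, both
sides are infinite, and it satisfies the extension properties `Θₙ` for all `n`. -/
structure IsRandom : Prop where
  countable : Countable V
  left_infinite : Γ.left.Infinite
  right_infinite : Γ.right.Infinite
  ext_left : ∀ X₁ X₂ : Finset V, ↑X₁ ⊆ Γ.left → ↑X₂ ⊆ Γ.left → Disjoint X₁ X₂ →
      ∃ v ∈ Γ.right, (∀ x ∈ X₁, Γ.adj x v) ∧ (∀ x ∈ X₂, ¬ Γ.adj x v)
  ext_right : ∀ X₁ X₂ : Finset V, ↑X₁ ⊆ Γ.right → ↑X₂ ⊆ Γ.right → Disjoint X₁ X₂ →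
      ∃ v ∈ Γ.left, (∀ x ∈ X₁, Γ.adj v x) ∧ (∀ x ∈ X₂, ¬ Γ.adj v x)

/-- `Sym_{l,r}(Γ)`: the group of permutations of `V` preserving both sides. -/
def symLR : Subgroup (Equiv.Perm V) where
  carrier := {g | (∀ v, g v ∈ Γ.left ↔ v ∈ Γ.left) ∧ (∀ v, g v ∈ Γ.right ↔ v ∈ Γ.right)}
  one_mem' := ⟨fun _ => Iff.rfl, fun _ => Iff.rfl⟩
  mul_mem' := by
    rintro a b ⟨hal, har⟩ ⟨hbl, hbr⟩
    exact ⟨fun v => (hal (b v)).trans (hbl v), fun v => (har (b v)).trans (hbr v)⟩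
  inv_mem' := by
    rintro a ⟨hal, har⟩
    refine ⟨fun v => ?_, fun v => ?_⟩
    · have h := hal (a⁻¹ v); rw [show ∀ w, a (a⁻¹ w) = w from a.apply_symm_apply] at h; exact h.symm
    · have h := har (a⁻¹ v); rw [show ∀ w, a (a⁻¹ w) = w from a.apply_symm_apply] at h; exact h.symm

/-- The automorphism group of `Γ`: side-preserving permutations preserving `adj`
(and hence both cross-types). -/
def autGroup : Subgroup (Equiv.Perm V) where
  carrier := {g | g ∈ Γ.symLR ∧ ∀ a b, Γ.adj a b ↔ Γ.adj (g a) (g b)}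
  one_mem' := ⟨Γ.symLR.one_mem, fun _ _ => Iff.rfl⟩
  mul_mem' := by
    rintro a b ⟨ha, ha2⟩ ⟨hb, hb2⟩
    exact ⟨mul_mem ha hb, fun x y => (hb2 x y).trans (ha2 (b x) (b y))⟩
  inv_mem' := by
    rintro a ⟨ha, ha2⟩
    refine ⟨inv_mem ha, fun x y => ?_⟩
    have h := ha2 (a⁻¹ x) (a⁻¹ y)
    rw [show ∀ w, a (a⁻¹ w) = w from a.apply_symm_apply, show ∀ w, a (a⁻¹ w) = w from a.apply_symm_apply] at h
    exact h.symm

/-- A permutation `g` is a switch with respect to a set `A` if it preserves the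
sides and, for every cross-edge `(a, b)`, the cross-type of `(a, b)` is preserved
if and only if `|{a, b} ∩ A| ≠ 1`. -/
def IsSwitch (g : Equiv.Perm V) (A : Set V) : Prop :=
  g ∈ Γ.symLR ∧ ∀ a ∈ Γ.left, ∀ b ∈ Γ.right,
    ((Γ.adj a b ↔ Γ.adj (g a) (g b)) ↔ ({a, b} ∩ A : Set V).ncard ≠ 1)

/-- The restriction of a map `g` to a set `S` is a switch with respect to `A`:
the condition of `IsSwitch` holds for all cross-edges inside `S`. -/
def IsSwitchOn (g : V → V) (S : Set V) (A : Set V) : Prop :=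
  ∀ a ∈ S ∩ Γ.left, ∀ b ∈ S ∩ Γ.right,
    ((Γ.adj a b ↔ Γ.adj (g a) (g b)) ↔ ({a, b} ∩ A : Set V).ncard ≠ 1)

/-- The restriction of a map `g` to a set `S` is an isomorphism: `g` preserves
the cross-type of every cross-edge inside `S`. -/
def IsIsoOn (g : V → V) (S : Set V) : Prop :=
  ∀ a ∈ S ∩ Γ.left, ∀ b ∈ S ∩ Γ.right, (Γ.adj a b ↔ Γ.adj (g a) (g b))

end BipartiteGraph

/-- A subgroup of the full symmetric group is closed (in the topology of
pointwise convergence) iff it contains every permutation which agrees with some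
member of the subgroup on each finite subset. -/
def IsClosedSubgroup {V : Type*} (G : Subgroup (Equiv.Perm V)) : Prop :=
  ∀ g : Equiv.Perm V, (∀ F : Finset V, ∃ h ∈ G, ∀ x ∈ F, h x = g x) → g ∈ G

/-- The closed subgroup generated by a set of permutations: the intersection of
all closed subgroups containing the set. -/
def closedClosure {V : Type*} (S : Set (Equiv.Perm V)) : Subgroup (Equiv.Perm V) :=
  sInf {G : Subgroup (Equiv.Perm V) | IsClosedSubgroup G ∧ S ⊆ ↑G}

namespace BipartiteGraph

variable {V : Type*} (Γ : BipartiteGraph V)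

/-- The switch group `S_X(Γ)`: the closed subgroup of `Sym_{l,r}(Γ)` generated
by `Aut(Γ)` together with all switches with respect to a single vertex `v ∈ R_i`
for `i ∈ X`. -/
def switchGroup (X : Set BSide) : Subgroup (Equiv.Perm V) :=
  closedClosure ((Γ.autGroup : Set (Equiv.Perm V)) ∪
    {g | ∃ i ∈ X, ∃ v ∈ Γ.side i, Γ.IsSwitch g {v}})

/-- The group `S_X(Γ)* `: the closed subgroup generated by `S_X(Γ)` together with
a switch `ρ` with respect to the whole side `R_l`. -/
def switchGroupStar (X : Set BSide) : Subgroup (Equiv.Perm V) :=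
  closedClosure ((Γ.switchGroup X : Set (Equiv.Perm V)) ∪ {g | Γ.IsSwitch g Γ.left})

/-- Membership in `Aut(Γ)*`, the group of side-preserving permutations which
either preserve all cross-types on `R_l × R_r` or exchange all cross-types on
`R_l × R_r`. -/
def InAutStar (g : Equiv.Perm V) : Prop :=
  g ∈ Γ.symLR ∧
    ((∀ a ∈ Γ.left, ∀ b ∈ Γ.right, (Γ.adj a b ↔ Γ.adj (g a) (g b))) ∨
     (∀ a ∈ Γ.left, ∀ b ∈ Γ.right, (Γ.adj a b ↔ ¬ Γ.adj (g a) (g b))))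

/-- The number of cross-edges of cross-type `P₁` inside the set `S`. -/
noncomputable def edgeCount (S : Set V) : ℕ :=
  {p : V × V | p.1 ∈ S ∧ p.2 ∈ S ∧ Γ.adj p.1 p.2}.ncard

/-- `g` preserves the parity of cross-types on `S`: the number of `P₁`
cross-edges in `S` is even iff the number of `P₁` cross-edges in `g[S]` is even. -/
def PreservesParityOn (g : V → V) (S : Set V) : Prop :=
  Even (Γ.edgeCount S) ↔ Even (Γ.edgeCount (g '' S))

/-- An `(m × n)`-subgraph of `Γ`: a finite set of vertices with `m` vertices on
the left side and `n` vertices on the right side. -/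
def IsMNSubgraph (S : Set V) (m n : ℕ) : Prop :=
  S.Finite ∧ (S ∩ Γ.left).ncard = m ∧ (S ∩ Γ.right).ncard = n

end BipartiteGraph

/-! ### Auxiliary machinery -/

namespace BipartiteGraph

variable {V : Type*} (Γ : BipartiteGraph V)

/-- `g` flips the cross-type of `(a, b)`. -/
def Flip (g : V → V) (a b : V) : Prop := ¬ (Γ.adj a b ↔ Γ.adj (g a) (g b))

lemma iff_shuffle (A B C D : Prop) : ((A ↔ B) ↔ (C ↔ D)) ↔ ((A ↔ C) ↔ (B ↔ D)) := by
  tauto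

lemma four_cycle_comp {Y1 Y2 Y3 Y4 X1 X2 X3 X4 : Prop}
    (H1 : (Y1 ↔ Y2) ↔ (Y3 ↔ Y4)) (H2 : (X1 ↔ X2) ↔ (X3 ↔ X4)) :
    ((¬ (Y1 ↔ X1)) ↔ ¬ (Y2 ↔ X2)) ↔ ((¬ (Y3 ↔ X3)) ↔ ¬ (Y4 ↔ X4)) := by
  rw [not_iff_not, not_iff_not, iff_shuffle Y1 X1 Y2 X2, H1, H2]
  exact iff_shuffle Y3 Y4 X3 X4

lemma ncard_pair_inter_singleton {a b v : V} (hab : a ≠ b) :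
    ((({a, b} : Set V) ∩ {v}).ncard ≠ 1) ↔ (a = v ↔ b = v) := by
  by_cases ha : a = v <;> by_cases hb : b = v
  · exact absurd (ha.trans hb.symm) hab
  · subst ha
    have e : (({a, b} : Set V) ∩ {a}) = {a} := by
      ext x
      simp only [Set.mem_inter_iff, Set.mem_insert_iff, Set.mem_singleton_iff]
      tauto
    rw [e, Set.ncard_singleton]
    simp [hb]
  · subst hb
    have e : (({a, b} : Set V) ∩ {b}) = {b} := by
      ext x
      simp only [Set.mem_inter_iff, Set.mem_insert_iff, Set.mem_singleton_iff]
      tauto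
    rw [e, Set.ncard_singleton]
    simp [ha]
  · have e : (({a, b} : Set V) ∩ {v}) = ∅ := by
      ext x
      simp only [Set.mem_inter_iff, Set.mem_insert_iff, Set.mem_singleton_iff,
        Set.mem_empty_iff_false, iff_false, not_and]
      rintro (rfl | rfl) rfl <;> [exact ha rfl; exact hb rfl]
    rw [e, Set.ncard_empty]
    simp [ha, hb]

set_option maxHeartbeats 1000000 in
/-- The subgroup of side-preserving permutations satisfying the "4-cycle"
parity condition: flips are given by an XOR of a left datum and a right datum. -/
def quasiSwitch : Subgroup (Equiv.Perm V) where
  carrier := {g | g ∈ Γ.symLR ∧ ∀ a ∈ Γ.left, ∀ a' ∈ Γ.left, ∀ b ∈ Γ.right, ∀ b' ∈ Γ.right,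
    ((Γ.Flip g a b ↔ Γ.Flip g a b') ↔ (Γ.Flip g a' b ↔ Γ.Flip g a' b'))}
  one_mem' := by
    refine ⟨Γ.symLR.one_mem, ?_⟩
    intro a _ a' _ b _ b' _
    simp only [Flip, Equiv.Perm.coe_one, id_eq]
  mul_mem' := by
    rintro x y ⟨hx, hx2⟩ ⟨hy, hy2⟩
    refine ⟨mul_mem hx hy, ?_⟩
    intro a ha a' ha' b hb b' hb'
    have key : ∀ (p q : V), (Γ.Flip (⇑(x * y)) p q ↔
        ¬ (Γ.Flip (⇑y) p q ↔ Γ.Flip (⇑x) (y p) (y q))) := by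
      intro p q
      simp only [Flip, Equiv.Perm.mul_apply]
      tauto
    have H1 := hy2 a ha a' ha' b hb b' hb'
    have H2 := hx2 (y a) ((hy.1 a).mpr ha) (y a') ((hy.1 a').mpr ha')
      (y b) ((hy.2 b).mpr hb) (y b') ((hy.2 b').mpr hb')
    rw [key a b, key a b', key a' b, key a' b']
    exact four_cycle_comp H1 H2
  inv_mem' := by
    rintro x ⟨hx, hx2⟩
    refine ⟨inv_mem hx, ?_⟩
    intro a ha a' ha' b hb b' hb'
    have key : ∀ (p q : V), (Γ.Flip (⇑x⁻¹) p q ↔ Γ.Flip (⇑x) (x⁻¹ p) (x⁻¹ q)) := by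
      intro p q
      simp only [Flip, show ∀ w, x (x⁻¹ w) = w from x.apply_symm_apply]
      tauto
    have hxi : x⁻¹ ∈ Γ.symLR := inv_mem hx
    rw [key a b, key a b', key a' b, key a' b']
    exact hx2 (x⁻¹ a) ((hxi.1 a).mpr ha) (x⁻¹ a') ((hxi.1 a').mpr ha')
      (x⁻¹ b) ((hxi.2 b).mpr hb) (x⁻¹ b') ((hxi.2 b').mpr hb')

lemma ne_of_sides {a b : V} (ha : a ∈ Γ.left) (hb : b ∈ Γ.right) : a ≠ b := by
  rintro rfl
  exact (Set.disjoint_left.mp Γ.disjoint_sides ha) hb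

lemma switchGroup_le_quasiSwitch (X : Set BSide) : Γ.switchGroup X ≤ Γ.quasiSwitch := by
  refine sInf_le ⟨?_, ?_⟩
  · -- closedness
    intro g hg
    classical
    refine ⟨⟨fun w => ?_, fun w => ?_⟩, ?_⟩
    · obtain ⟨k, hk, hag⟩ := hg {w}
      have e := hag w (Finset.mem_singleton_self w)
      rw [← e]
      exact hk.1.1 w
    · obtain ⟨k, hk, hag⟩ := hg {w}
      have e := hag w (Finset.mem_singleton_self w)
      rw [← e]
      exact hk.1.2 w
    · intro a ha a' ha' b hb b' hb'
      obtain ⟨k, hk, hag⟩ := hg {a, a', b, b'}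
      have ea := hag a (by simp)
      have ea' := hag a' (by simp)
      have eb := hag b (by simp)
      have eb' := hag b' (by simp)
      have H := hk.2 a ha a' ha' b hb b' hb'
      simp only [Flip] at H ⊢
      rw [← ea, ← ea', ← eb, ← eb']
      exact H
  · -- generators
    rintro g (hg | ⟨i, _, w, _, hsw⟩)
    · obtain ⟨hg1, hg2⟩ := hg
      refine ⟨hg1, ?_⟩
      intro a _ a' _ b _ b' _
      have f1 : ¬ Γ.Flip (⇑g) a b := fun c => c (hg2 a b)
      have f2 : ¬ Γ.Flip (⇑g) a b' := fun c => c (hg2 a b')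
      have f3 : ¬ Γ.Flip (⇑g) a' b := fun c => c (hg2 a' b)
      have f4 : ¬ Γ.Flip (⇑g) a' b' := fun c => c (hg2 a' b')
      tauto
    · refine ⟨hsw.1, ?_⟩
      intro a ha a' ha' b hb b' hb'
      have key : ∀ p, p ∈ Γ.left → ∀ q, q ∈ Γ.right →
          (Γ.Flip (⇑g) p q ↔ ¬ (p = w ↔ q = w)) := by
        intro p hp q hq
        have h1 := hsw.2 p hp q hq
        have h2 := ncard_pair_inter_singleton (v := w) (Γ.ne_of_sides hp hq)
        simp only [Flip]
        tauto
      rw [key a ha b hb, key a ha b' hb', key a' ha' b hb, key a' ha' b' hb']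
      exact four_cycle_comp (iff_of_true Iff.rfl Iff.rfl) Iff.rfl

end BipartiteGraph

/-- (From the proof of Claim C, Theorem 5.1.) Suppose `h ∈ F(S_{l,r}(Γ))` (here
represented by a member `h` of `S_{l,r}(Γ)`), `U` is a finite bipartite subgraph
on which `h` restricts to the identity, and `v ∉ U`.  Then `h ↾ (U ∪ {v})` is
either an isomorphism or a switch with respect to `v`. -/
theorem isIsoOn_or_isSwitchOn_of_id_on {V : Type*} (Γ : BipartiteGraph V)
    (hΓ : Γ.IsRandom) (h : Equiv.Perm V) (hmem : h ∈ Γ.switchGroup {BSide.l, BSide.r})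
    (U : Finset V)
    (hUl : ((U : Set V) ∩ Γ.left).Nonempty) (hUr : ((U : Set V) ∩ Γ.right).Nonempty)
    (hid : ∀ x ∈ U, h x = x) (v : V) (hv : v ∉ U) :
    Γ.IsIsoOn (⇑h) ((U : Set V) ∪ {v}) ∨ Γ.IsSwitchOn (⇑h) ((U : Set V) ∪ {v}) {v} := by
  classical
  obtain ⟨ul, hul⟩ := hUl
  obtain ⟨ur, hur⟩ := hUr
  obtain ⟨hsym, h4⟩ := Γ.switchGroup_le_quasiSwitch _ hmem
  have hUflip : ∀ a ∈ (U : Set V), ∀ b ∈ (U : Set V), ¬ Γ.Flip (⇑h) a b := by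
    intro a ha b hb c
    exact c (by rw [hid a ha, hid b hb])
  have hvlr : v ∈ Γ.left ∪ Γ.right := by
    rw [Γ.union_eq]; exact Set.mem_univ v
  have hswitch_iff : ∀ a, a ∈ Γ.left → ∀ b, b ∈ Γ.right →
      (((Γ.adj a b ↔ Γ.adj (h a) (h b)) ↔ ((({a, b} : Set V) ∩ {v}).ncard ≠ 1)) ↔
        (¬ Γ.Flip (⇑h) a b ↔ (a = v ↔ b = v))) := by
    intro a ha b hb
    have h2 := BipartiteGraph.ncard_pair_inter_singleton (v := v) (Γ.ne_of_sides ha hb)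
    simp only [BipartiteGraph.Flip, not_not, h2]
  rcases hvlr with hvl | hvr
  · -- v is on the left; every right vertex of U ∪ {v} is in U
    have hbU : ∀ b, b ∈ ((U : Set V) ∪ {v}) ∩ Γ.right → b ∈ (U : Set V) ∧ b ≠ v := by
      rintro b ⟨hb1, hb2⟩
      rcases hb1 with hb1 | hb1
      · exact ⟨hb1, fun e => (Set.disjoint_left.mp Γ.disjoint_sides hvl) (e ▸ hb2)⟩
      · exact absurd hb1 (Γ.ne_of_sides hvl hb2).symm
    have key : ∀ b ∈ (U : Set V) ∩ Γ.right, (Γ.Flip (⇑h) v b ↔ Γ.Flip (⇑h) v ur) := by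
      intro b hb
      exact (h4 v hvl ul hul.2 b hb.2 ur hur.2).mpr
        (iff_of_false (hUflip ul hul.1 b hb.1) (hUflip ul hul.1 ur hur.1))
    by_cases hflip : Γ.Flip (⇑h) v ur
    · right
      intro a ha b hb
      obtain ⟨hbU', hbv⟩ := hbU b hb
      rw [hswitch_iff a (Set.mem_of_mem_inter_right ha) b hb.2]
      rcases ha.1 with haU | hav
      · have hav : a ≠ v := by rintro rfl; exact hv haU
        exact iff_of_true (hUflip a haU b hbU')
          ⟨fun e => absurd e hav, fun e => absurd e hbv⟩
      · have hav' : a = v := hav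
        subst hav'
        exact iff_of_false (not_not_intro ((key b ⟨hbU', hb.2⟩).mpr hflip))
          (fun e => hbv (e.mp rfl))
    · left
      intro a ha b hb
      obtain ⟨hbU', hbv⟩ := hbU b hb
      rcases ha.1 with haU | hav
      · by_contra hcon
        exact hUflip a haU b hbU' hcon
      · have hav' : a = v := hav
        subst hav'
        by_contra hcon
        exact hflip ((key b ⟨hbU', hb.2⟩).mp hcon)
  · -- v is on the right; every left vertex of U ∪ {v} is in U
    have haU : ∀ a, a ∈ ((U : Set V) ∪ {v}) ∩ Γ.left → a ∈ (U : Set V) ∧ a ≠ v := by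
      rintro a ⟨ha1, ha2⟩
      rcases ha1 with ha1 | ha1
      · exact ⟨ha1, fun e => (Set.disjoint_left.mp Γ.disjoint_sides ha2) (e ▸ hvr)⟩
      · exact absurd ha1 (Γ.ne_of_sides ha2 hvr)
    have key : ∀ a ∈ (U : Set V) ∩ Γ.left, (Γ.Flip (⇑h) a v ↔ Γ.Flip (⇑h) ul v) := by
      intro a ha
      have H := h4 a ha.2 ul hul.2 v hvr ur hur.2
      have f1 : ¬ Γ.Flip (⇑h) a ur := hUflip a ha.1 ur hur.1
      have f2 : ¬ Γ.Flip (⇑h) ul ur := hUflip ul hul.1 ur hur.1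
      have e1 : (Γ.Flip (⇑h) a v ↔ Γ.Flip (⇑h) a ur) ↔ ¬ Γ.Flip (⇑h) a v :=
        ⟨fun i c => f1 (i.mp c), fun n => iff_of_false n f1⟩
      have e2 : (Γ.Flip (⇑h) ul v ↔ Γ.Flip (⇑h) ul ur) ↔ ¬ Γ.Flip (⇑h) ul v :=
        ⟨fun i c => f2 (i.mp c), fun n => iff_of_false n f2⟩
      exact not_iff_not.mp ((e1.symm.trans H).trans e2)
    by_cases hflip : Γ.Flip (⇑h) ul v
    · right
      intro a ha b hb
      obtain ⟨haU', hav⟩ := haU a ha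
      rw [hswitch_iff a ha.2 b (Set.mem_of_mem_inter_right hb)]
      rcases hb.1 with hbU | hbv
      · have hbv : b ≠ v := by rintro rfl; exact hv hbU
        exact iff_of_true (hUflip a haU' b hbU)
          ⟨fun e => absurd e hav, fun e => absurd e hbv⟩
      · have hbv' : b = v := hbv
        subst hbv'
        exact iff_of_false (not_not_intro ((key a ⟨haU', ha.2⟩).mpr hflip))
          (fun e => hav (e.mpr rfl))
    · left
      intro a ha b hb
      obtain ⟨haU', hav⟩ := haU a ha
      rcases hb.1 with hbU | hbv
      · by_contra hcon
        exact hUflip a haU' b hbU hcon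
      · have hbv' : b = v := hbv
        subst hbv'
        by_contra hcon
        exact hflip ((key a ⟨haU', ha.2⟩).mp hcon)
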